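/- Assume the setting, with W𝟏 = 𝟏 (each row of W sums to 1), and additionally assume h is convex and differentiable with L_h-Lipschitz gradient (‖∇h(y) − ∇h(ỹ)‖ ≤ L_h‖y − ỹ‖ for all y, ỹ), L_h ≥ 0. Fix x̄ ∈ ℝ^{n₁} and Λ̄ = (λ̄_1,…,λ̄_m) ∈ (ℝ^{n₂})^m. Suppose Ȳ = (ȳ_1,…,ȳ_m) satisfies: (a) Φ((x̄,…,x̄), Λ̄, Ȳ) ≥ Φ((x̄,…,x̄), Λ̄, Y) for every Y; and (b) (1/m)(∇_y f_i(x̄, ȳ_i) − ∇h(ȳ_i)) = (L/(2√m)) Σ_{j=1}^m (w_{ji} − δ_{ij}) λ̄_j for every i. Let ŷ be a maximizer of y ↦ (1/m) Σ_{i=1}^m f_i(x̄, y) − h(y) over ℝ^{n₂}, and ȳ_avg = (1/m) Σ_{i=1}^m ȳ_i. Then μ ‖ŷ − ȳ_avg‖² ≤ ((L + L_h)/m) Σ_{i=1}^m ‖ȳ_i − ȳ_avg‖². -/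

import Mathlib

open scoped BigOperators RealInnerProductSpace

section Helpers
variable {E : Type*} [NormedAddCommGroup E] [InnerProductSpace ℝ E] [CompleteSpace E]

lemma hasDerivAt_line (φ : E → ℝ) (G : E → E)
    (hφ : ∀ y, HasGradientAt φ (G y) y) (a v : E) (t : ℝ) :
    HasDerivAt (fun s : ℝ => φ (a + s • v)) ⟪G (a + t • v), v⟫ t := by
  have hl : HasDerivAt (fun s : ℝ => a + s • v) v t := by
    simpa using ((hasDerivAt_id t).smul_const v).const_add a
  have h2 := (hφ (a + t • v)).hasFDerivAt.comp_hasDerivAt t hl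
  simpa [InnerProductSpace.toDual_apply_apply, Function.comp_def] using h2

lemma descent_lemma (φ : E → ℝ) (G : E → E)
    (hφ : ∀ y, HasGradientAt φ (G y) y) (K : ℝ)
    (hLip : ∀ y y', ‖G y - G y'‖ ≤ K * ‖y - y'‖) (a b : E) :
    φ b ≤ φ a + ⟪G a, b - a⟫ + K / 2 * ‖b - a‖ ^ 2 := by
  set v := b - a with hv
  set χ : ℝ → ℝ := fun t => φ (a + t • v) - t * ⟪G a, v⟫ - K / 2 * t ^ 2 * ‖v‖ ^ 2 with hχ
  have hd : ∀ t : ℝ, HasDerivAt χ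
      (⟪G (a + t • v), v⟫ - ⟪G a, v⟫ - K * t * ‖v‖ ^ 2) t := by
    intro t
    have h1 := hasDerivAt_line φ G hφ a v t
    have h2 : HasDerivAt (fun t : ℝ => t * ⟪G a, v⟫) ⟪G a, v⟫ t := by
      simpa using (hasDerivAt_id t).mul_const ⟪G a, v⟫
    have h3 : HasDerivAt (fun t : ℝ => K / 2 * t ^ 2 * ‖v‖ ^ 2) (K * t * ‖v‖ ^ 2) t := by
      have := ((hasDerivAt_pow 2 t).const_mul (K / 2)).mul_const (‖v‖ ^ 2)
      exact this.congr_deriv (by rw [show (2:ℕ) - 1 = 1 from rfl]; push_cast; ring)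
    exact (h1.sub h2).sub h3
  have hanti : AntitoneOn χ (Set.Icc (0:ℝ) 1) := by
    apply antitoneOn_of_deriv_nonpos (convex_Icc 0 1)
    · exact fun t _ => ((hd t).continuousAt).continuousWithinAt
    · exact fun t _ => ((hd t).differentiableAt).differentiableWithinAt
    · intro t ht
      rw [interior_Icc] at ht
      rw [(hd t).deriv]
      have hle : ⟪G (a + t • v) - G a, v⟫ ≤ K * t * ‖v‖ ^ 2 := by
        calc ⟪G (a + t • v) - G a, v⟫ ≤ ‖G (a + t • v) - G a‖ * ‖v‖ :=
              real_inner_le_norm _ _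
          _ ≤ (K * ‖(a + t • v) - a‖) * ‖v‖ := by
              gcongr; exact hLip _ _
          _ = K * t * ‖v‖ ^ 2 := by
              rw [add_sub_cancel_left, norm_smul, Real.norm_eq_abs,
                abs_of_pos ht.1]; ring
      rw [inner_sub_left] at hle
      linarith
  have h01 := hanti (Set.left_mem_Icc.2 zero_le_one) (Set.right_mem_Icc.2 zero_le_one) zero_le_one
  simp only [hχ, zero_smul, add_zero, one_smul, zero_pow, one_pow] at h01
  have hab : a + v = b := by rw [hv]; abel
  rw [hab] at h01
  nlinarith [h01]

lemma strong_min (φ : E → ℝ) (G : E → E)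
    (hφ : ∀ y, HasGradientAt φ (G y) y) (μ : ℝ)
    (hmono : ∀ y y', μ * ‖y - y'‖ ^ 2 ≤ ⟪y - y', G y - G y'⟫)
    (p q : E) (hp : G p = 0) :
    φ p + μ / 2 * ‖q - p‖ ^ 2 ≤ φ q := by
  set e := q - p with he
  set ψ : ℝ → ℝ := fun t => φ (p + t • e) - μ / 2 * t ^ 2 * ‖e‖ ^ 2 with hψ
  have hd : ∀ t : ℝ, HasDerivAt ψ (⟪G (p + t • e), e⟫ - μ * t * ‖e‖ ^ 2) t := by
    intro t
    have h1 := hasDerivAt_line φ G hφ p e t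
    have h3 : HasDerivAt (fun t : ℝ => μ / 2 * t ^ 2 * ‖e‖ ^ 2) (μ * t * ‖e‖ ^ 2) t := by
      have := ((hasDerivAt_pow 2 t).const_mul (μ / 2)).mul_const (‖e‖ ^ 2)
      exact this.congr_deriv (by rw [show (2:ℕ) - 1 = 1 from rfl]; push_cast; ring)
    exact h1.sub h3
  have hmon : MonotoneOn ψ (Set.Icc (0:ℝ) 1) := by
    apply monotoneOn_of_deriv_nonneg (convex_Icc 0 1)
    · exact fun t _ => ((hd t).continuousAt).continuousWithinAt
    · exact fun t _ => ((hd t).differentiableAt).differentiableWithinAt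
    · intro t ht
      rw [interior_Icc] at ht
      rw [(hd t).deriv]
      have := hmono (p + t • e) p
      rw [add_sub_cancel_left, hp, sub_zero] at this
      rw [norm_smul, Real.norm_eq_abs, abs_of_pos ht.1, real_inner_smul_left] at this
      have h4 : μ * t * ‖e‖ ^ 2 ≤ ⟪G (p + t • e), e⟫ := by
        have ht0 := ht.1
        rw [real_inner_comm] at this
        nlinarith [this]
      linarith
  have h01 := hmon (Set.left_mem_Icc.2 zero_le_one) (Set.right_mem_Icc.2 zero_le_one) zero_le_one
  simp only [hψ, zero_smul, add_zero, one_smul, zero_pow, one_pow] at h01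
  have hpe : p + e = q := by rw [he]; abel
  rw [hpe] at h01
  nlinarith [h01]

lemma convex_first_order (h : E → ℝ) (Gh : E → E)
    (hconv : ConvexOn ℝ Set.univ h) (hGh : ∀ y, HasGradientAt h (Gh y) y)
    (y v : E) : ⟪Gh y, v⟫ ≤ h (y + v) - h y := by
  have hd : HasDerivAt (fun s : ℝ => h (y + s • v)) ⟪Gh (y + (0:ℝ) • v), v⟫ 0 :=
    hasDerivAt_line h Gh hGh y v 0
  rw [zero_smul, add_zero] at hd
  have hslope := hd.hasDerivWithinAt (s := Set.Ioi (0:ℝ))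
  rw [hasDerivWithinAt_iff_tendsto_slope] at hslope
  have hsub : Set.Ioi (0:ℝ) \ {0} = Set.Ioi 0 := by simp
  rw [hsub] at hslope
  refine le_of_tendsto hslope ?_
  filter_upwards [Ioc_mem_nhdsGT_of_mem (Set.left_mem_Ico.2 zero_lt_one)] with t ht
  have ht0 : 0 < t := ht.1
  have hcv := hconv.2 (Set.mem_univ (y + v)) (Set.mem_univ y)
    (le_of_lt ht0) (by linarith [ht.2] : (0:ℝ) ≤ 1 - t) (by ring)
  have hpt : t • (y + v) + (1 - t) • y = y + t • v := by
    rw [smul_add, sub_smul, one_smul]; abel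
  rw [hpt] at hcv
  simp only [smul_eq_mul] at hcv
  rw [slope_def_field]
  simp only [zero_smul, add_zero, sub_zero]
  rw [div_le_iff₀ ht0]
  nlinarith [hcv]

lemma convex_grad_mono (h : E → ℝ) (Gh : E → E)
    (hconv : ConvexOn ℝ Set.univ h) (hGh : ∀ y, HasGradientAt h (Gh y) y)
    (y y' : E) : 0 ≤ ⟪y - y', Gh y - Gh y'⟫ := by
  have h1 := convex_first_order h Gh hconv hGh y (y' - y)
  have h2 := convex_first_order h Gh hconv hGh y' (y - y')
  rw [add_sub_cancel] at h1 h2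
  rw [inner_sub_left, inner_sub_right, inner_sub_right]
  have e1 : ⟪Gh y, y' - y⟫ = ⟪Gh y, y'⟫ - ⟪Gh y, y⟫ := inner_sub_right _ _ _
  have e2 : ⟪Gh y', y - y'⟫ = ⟪Gh y', y⟫ - ⟪Gh y', y'⟫ := inner_sub_right _ _ _
  rw [e1] at h1; rw [e2] at h2
  have c1 : ⟪y, Gh y⟫ = ⟪Gh y, y⟫ := real_inner_comm _ _
  have c2 : ⟪y, Gh y'⟫ = ⟪Gh y', y⟫ := real_inner_comm _ _
  have c3 : ⟪y', Gh y⟫ = ⟪Gh y, y'⟫ := real_inner_comm _ _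
  have c4 : ⟪y', Gh y'⟫ = ⟪Gh y', y'⟫ := real_inner_comm _ _
  linarith

end Helpers

/-- The function `Φ(X, Λ, Y)` of the reformulated decentralized minimax problem. -/
noncomputable def Phi {m n₁ n₂ : ℕ} (L : ℝ)
    (f : Fin m → EuclideanSpace ℝ (Fin n₁) → EuclideanSpace ℝ (Fin n₂) → ℝ)
    (h : EuclideanSpace ℝ (Fin n₂) → ℝ) (w : Fin m → Fin m → ℝ)
    (X : Fin m → EuclideanSpace ℝ (Fin n₁))
    (Λ Y : Fin m → EuclideanSpace ℝ (Fin n₂)) : ℝ :=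
  (1 / (m : ℝ)) * ∑ i, (f i (X i) (Y i) - h (Y i))
    - (L / (2 * Real.sqrt (m : ℝ))) *
        ∑ i, ⟪Λ i, ∑ j, (w i j - if i = j then 1 else 0) • Y j⟫

/-- Smooth-regularizer case of the lemma relating near-stationarity of
the reformulation to near-stationarity of the original problem: if `h` is convex with
`L_h`-Lipschitz gradient, then `μ‖ŷ − ȳ_avg‖² ≤ ((L + L_h)/m) Σ_i ‖ȳ_i − ȳ_avg‖²`. -/
theorem dgdmax_dual_consensus_to_original_gap_smooth
    {m n₁ n₂ : ℕ} (hm : 0 < m) (hn₁ : 0 < n₁) (hn₂ : 0 < n₂)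
    (L μ Lh : ℝ) (hμ : 0 < μ) (hLμ : μ ≤ L) (hLh : 0 ≤ Lh)
    (f : Fin m → EuclideanSpace ℝ (Fin n₁) → EuclideanSpace ℝ (Fin n₂) → ℝ)
    (Gx : Fin m → EuclideanSpace ℝ (Fin n₁) → EuclideanSpace ℝ (Fin n₂) →
      EuclideanSpace ℝ (Fin n₁))
    (Gy : Fin m → EuclideanSpace ℝ (Fin n₁) → EuclideanSpace ℝ (Fin n₂) →
      EuclideanSpace ℝ (Fin n₂))
    (hGx : ∀ i x y, HasGradientAt (fun x' => f i x' y) (Gx i x y) x)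
    (hGy : ∀ i x y, HasGradientAt (fun y' => f i x y') (Gy i x y) y)
    (hLip : ∀ i x y x' y',
      ‖Gx i x y - Gx i x' y'‖ ^ 2 + ‖Gy i x y - Gy i x' y'‖ ^ 2
        ≤ L ^ 2 * (‖x - x'‖ ^ 2 + ‖y - y'‖ ^ 2))
    (hconc : ∀ i x y y', ⟪y - y', Gy i x y - Gy i x y'⟫ ≤ -μ * ‖y - y'‖ ^ 2)
    (h : EuclideanSpace ℝ (Fin n₂) → ℝ) (hconv : ConvexOn ℝ Set.univ h)
    (Gh : EuclideanSpace ℝ (Fin n₂) → EuclideanSpace ℝ (Fin n₂))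
    (hGh : ∀ y, HasGradientAt h (Gh y) y)
    (hGhLip : ∀ y y', ‖Gh y - Gh y'‖ ≤ Lh * ‖y - y'‖)
    (w : Fin m → Fin m → ℝ) (hrow : ∀ i, ∑ j, w i j = 1)
    (xb : EuclideanSpace ℝ (Fin n₁))
    (Lamb Yb : Fin m → EuclideanSpace ℝ (Fin n₂))
    (hmax : ∀ Y : Fin m → EuclideanSpace ℝ (Fin n₂),
      Phi L f h w (fun _ => xb) Lamb Y ≤ Phi L f h w (fun _ => xb) Lamb Yb)
    (hstat : ∀ i, (1 / (m : ℝ)) • (Gy i xb (Yb i) - Gh (Yb i))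
        = (L / (2 * Real.sqrt (m : ℝ))) •
            ∑ j, (w j i - if i = j then 1 else 0) • Lamb j)
    (yh : EuclideanSpace ℝ (Fin n₂))
    (hyh : ∀ y : EuclideanSpace ℝ (Fin n₂),
      (1 / (m : ℝ)) * ∑ i, f i xb y - h y ≤ (1 / (m : ℝ)) * ∑ i, f i xb yh - h yh) :
    μ * ‖yh - (1 / (m : ℝ)) • ∑ i, Yb i‖ ^ 2
      ≤ ((L + Lh) / (m : ℝ)) * ∑ i, ‖Yb i - (1 / (m : ℝ)) • ∑ k, Yb k‖ ^ 2 := by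
  classical
  have hmR : (0:ℝ) < (m:ℝ) := Nat.cast_pos.2 hm
  have hL0 : (0:ℝ) ≤ L := le_trans hμ.le hLμ
  set yb : EuclideanSpace ℝ (Fin n₂) := (1 / (m : ℝ)) • ∑ i, Yb i with hyb
  -- Lipschitz bound for Gy in y
  have hGyLip : ∀ i (y y' : EuclideanSpace ℝ (Fin n₂)),
      ‖Gy i xb y - Gy i xb y'‖ ≤ L * ‖y - y'‖ := by
    intro i y y'
    have h1 := hLip i xb y xb y'
    simp only [sub_self, norm_zero] at h1
    have h2 : ‖Gy i xb y - Gy i xb y'‖ ^ 2 ≤ (L * ‖y - y'‖) ^ 2 := by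
      nlinarith [sq_nonneg ‖Gx i xb y - Gx i xb y'‖]
    have h3 := Real.sqrt_le_sqrt h2
    rwa [Real.sqrt_sq (norm_nonneg _), Real.sqrt_sq (by positivity)] at h3
  -- the averaged objective g and its gradient Gg
  set g : EuclideanSpace ℝ (Fin n₂) → ℝ := fun y => (1 / (m : ℝ)) * ∑ i, f i xb y - h y with hg
  set Gg : EuclideanSpace ℝ (Fin n₂) → EuclideanSpace ℝ (Fin n₂) :=
    fun y => (1 / (m : ℝ)) • (∑ i, Gy i xb y) - Gh y with hGgdef
  have hGg : ∀ y, HasGradientAt g (Gg y) y := by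
    intro y
    have hsum : HasFDerivAt (fun y : EuclideanSpace ℝ (Fin n₂) => ∑ i, f i xb y)
        (∑ i, InnerProductSpace.toDual ℝ _ (Gy i xb y)) y :=
      HasFDerivAt.fun_sum (fun i _ => (hGy i xb y).hasFDerivAt)
    have hc := (hsum.const_mul (1 / (m:ℝ))).sub (hGh y).hasFDerivAt
    have heq : InnerProductSpace.toDual ℝ _ (Gg y)
        = (1 / (m:ℝ)) • (∑ i, InnerProductSpace.toDual ℝ _ (Gy i xb y))
          - InnerProductSpace.toDual ℝ _ (Gh y) := by
      simp [hGgdef, map_sub, map_smul, map_sum]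
    rw [hasGradientAt_iff_hasFDerivAt, heq]
    exact hc
  -- gradient vanishes at the maximizer yh
  have hGgyh : Gg yh = 0 := by
    have hlm : IsLocalMax g yh := Filter.Eventually.of_forall hyh
    have hz := hlm.hasFDerivAt_eq_zero (hGg yh).hasFDerivAt
    have h0 : InnerProductSpace.toDual ℝ _ (Gg yh) = InnerProductSpace.toDual ℝ _ (0 : EuclideanSpace ℝ (Fin n₂)) := by
      simpa using hz
    exact (InnerProductSpace.toDual ℝ _).injective h0
  -- strong monotonicity of the negated gradient
  have hmono : ∀ y y' : EuclideanSpace ℝ (Fin n₂),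
      μ * ‖y - y'‖ ^ 2 ≤ ⟪y - y', (-(Gg y)) - (-(Gg y'))⟫ := by
    intro y y'
    have e1 : (-(Gg y)) - (-(Gg y'))
        = (1 / (m : ℝ)) • (∑ i, (Gy i xb y' - Gy i xb y)) + (Gh y - Gh y') := by
      simp only [hGgdef, Finset.sum_sub_distrib, smul_sub]
      abel
    rw [e1, inner_add_right, real_inner_smul_right, inner_sum]
    have hterm : ∀ i : Fin m, μ * ‖y - y'‖ ^ 2 ≤ ⟪y - y', Gy i xb y' - Gy i xb y⟫ := by
      intro i
      have hc := hconc i xb y y'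
      have hneg : ⟪y - y', Gy i xb y' - Gy i xb y⟫ = -⟪y - y', Gy i xb y - Gy i xb y'⟫ := by
        rw [← inner_neg_right]; congr 1; abel
      rw [hneg]; linarith
    have hsum : (m : ℝ) * (μ * ‖y - y'‖ ^ 2) ≤ ∑ i, ⟪y - y', Gy i xb y' - Gy i xb y⟫ := by
      calc (m : ℝ) * (μ * ‖y - y'‖ ^ 2) = ∑ _i : Fin m, μ * ‖y - y'‖ ^ 2 := by
            rw [Finset.sum_const, Finset.card_univ, Fintype.card_fin, nsmul_eq_mul]
        _ ≤ _ := Finset.sum_le_sum (fun i _ => hterm i)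
    have hmon2 := convex_grad_mono h Gh hconv hGh y y'
    have h5 : (1 / (m:ℝ)) * ((m : ℝ) * (μ * ‖y - y'‖ ^ 2)) ≤
        (1 / (m:ℝ)) * ∑ i, ⟪y - y', Gy i xb y' - Gy i xb y⟫ := by
      apply mul_le_mul_of_nonneg_left hsum (by positivity)
    rw [one_div, inv_mul_cancel_left₀ (ne_of_gt hmR), ← one_div] at h5
    linarith
  -- strong concavity of g around its maximizer
  have hstrong : g yb + μ / 2 * ‖yb - yh‖ ^ 2 ≤ g yh := by
    have hφ : ∀ y : EuclideanSpace ℝ (Fin n₂),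
        HasGradientAt (fun y => -(g y)) (-(Gg y)) y := by
      intro y
      have hn := (hGg y).hasFDerivAt.neg
      rw [hasGradientAt_iff_hasFDerivAt]
      rw [map_neg]; exact hn
    have hsm := strong_min (fun y => -(g y)) (fun y => -(Gg y)) hφ μ hmono yh yb
      (by simp [hGgyh])
    linarith
  -- consensus evaluation of Phi at yh
  have hcons : Phi L f h w (fun _ => xb) Lamb (fun _ => yh) = g yh := by
    have hzero : ∀ i : Fin m, ∑ j, (w i j - if i = j then 1 else 0) • yh = 0 := by
      intro i
      rw [← Finset.sum_smul]
      have hz : ∑ j, (w i j - if i = j then 1 else 0) = 0 := by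
        rw [Finset.sum_sub_distrib, hrow i]
        simp
      rw [hz, zero_smul]
    simp only [Phi, hzero, inner_zero_right, Finset.sum_const_zero, mul_zero, sub_zero]
    rw [Finset.sum_sub_distrib, Finset.sum_const, Finset.card_univ, Fintype.card_fin, mul_sub]
    simp only [hg, nsmul_eq_mul]
    rw [one_div, inv_mul_cancel_left₀ (ne_of_gt hmR)]
  -- rewriting Phi at Yb using stationarity
  have hci : ∀ i : Fin m, ∑ j, (w i j - if i = j then 1 else 0) = (0:ℝ) := by
    intro i
    rw [Finset.sum_sub_distrib, hrow i]
    simp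
  have hPhiYb : Phi L f h w (fun _ => xb) Lamb Yb
      = (1 / (m : ℝ)) * ∑ i, (f i xb (Yb i) - h (Yb i))
        - ∑ i, (1 / (m : ℝ)) * ⟪Gy i xb (Yb i) - Gh (Yb i), Yb i - yb⟫ := by
    have hA : ∀ i : Fin m, ⟪Lamb i, ∑ j, (w i j - if i = j then 1 else 0) • Yb j⟫
        = ∑ j, (w i j - if i = j then 1 else 0) * ⟪Lamb i, Yb j - yb⟫ := by
      intro i
      have e : ∑ j, (w i j - if i = j then 1 else 0) • Yb j
          = ∑ j, (w i j - if i = j then 1 else 0) • (Yb j - yb) := by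
        simp only [smul_sub, Finset.sum_sub_distrib, ← Finset.sum_smul, hci, zero_smul, sub_zero]
      rw [e, inner_sum]
      exact Finset.sum_congr rfl (fun j _ => real_inner_smul_right _ _ _)
    have hB : ∀ j : Fin m,
        ∑ i, (L / (2 * Real.sqrt (m:ℝ))) * ((w i j - if i = j then 1 else 0) * ⟪Lamb i, Yb j - yb⟫)
          = (1 / (m : ℝ)) * ⟪Gy j xb (Yb j) - Gh (Yb j), Yb j - yb⟫ := by
      intro j
      have hs := hstat j
      have step1 : ∑ i, (L / (2 * Real.sqrt (m:ℝ))) * ((w i j - if i = j then 1 else 0) * ⟪Lamb i, Yb j - yb⟫)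
          = ⟪(L / (2 * Real.sqrt (m:ℝ))) • ∑ i, (w i j - if j = i then 1 else 0) • Lamb i, Yb j - yb⟫ := by
        rw [real_inner_smul_left, sum_inner, Finset.mul_sum]
        refine Finset.sum_congr rfl fun i _ => ?_
        rw [real_inner_smul_left]
        have hif : (if j = i then (1:ℝ) else 0) = (if i = j then 1 else 0) := by
          simp [eq_comm]
        rw [hif]
      rw [step1, ← hs, real_inner_smul_left]
    simp only [Phi]
    congr 1
    calc L / (2 * Real.sqrt (m:ℝ)) * ∑ i, ⟪Lamb i, ∑ j, (w i j - if i = j then 1 else 0) • Yb j⟫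
        = ∑ i, ∑ j, (L / (2 * Real.sqrt (m:ℝ))) * ((w i j - if i = j then 1 else 0) * ⟪Lamb i, Yb j - yb⟫) := by
          rw [Finset.mul_sum]
          refine Finset.sum_congr rfl fun i _ => ?_
          rw [hA, Finset.mul_sum]
      _ = ∑ j, ∑ i, (L / (2 * Real.sqrt (m:ℝ))) * ((w i j - if i = j then 1 else 0) * ⟪Lamb i, Yb j - yb⟫) :=
          Finset.sum_comm
      _ = ∑ j, (1 / (m : ℝ)) * ⟪Gy j xb (Yb j) - Gh (Yb j), Yb j - yb⟫ :=
          Finset.sum_congr rfl fun j _ => hB j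
  -- per-agent descent bounds summed
  have hbound : Phi L f h w (fun _ => xb) Lamb Yb
      ≤ g yb + ((L + Lh) / (2 * (m:ℝ))) * ∑ i, ‖Yb i - yb‖ ^ 2 := by
    have hper : ∀ i : Fin m, f i xb (Yb i) - h (Yb i) - ⟪Gy i xb (Yb i) - Gh (Yb i), Yb i - yb⟫
        ≤ (f i xb yb - h yb) + (L + Lh) / 2 * ‖Yb i - yb‖ ^ 2 := by
      intro i
      have hφn : ∀ y, HasGradientAt (fun y => -(f i xb y)) (-(Gy i xb y)) y := by
        intro y
        have hn := (hGy i xb y).hasFDerivAt.neg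
        rw [hasGradientAt_iff_hasFDerivAt]
        rw [map_neg]; exact hn
      have hLipn : ∀ y y' : EuclideanSpace ℝ (Fin n₂),
          ‖(-(Gy i xb y)) - (-(Gy i xb y'))‖ ≤ L * ‖y - y'‖ := by
        intro y y'
        have e : (-(Gy i xb y)) - (-(Gy i xb y')) = -(Gy i xb y - Gy i xb y') := by abel
        rw [e, norm_neg]
        exact hGyLip i y y'
      have hd1 := descent_lemma (fun y => -(f i xb y)) (fun y => -(Gy i xb y)) hφn L hLipn (Yb i) yb
      have hi1 : ⟪-(Gy i xb (Yb i)), yb - Yb i⟫ = ⟪Gy i xb (Yb i), Yb i - yb⟫ := by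
        rw [inner_neg_left, ← inner_neg_right]
        congr 1
        abel
      rw [hi1, norm_sub_rev] at hd1
      have hd2 := descent_lemma h Gh hGh Lh hGhLip (Yb i) yb
      have hi2 : ⟪Gh (Yb i), yb - Yb i⟫ = -⟪Gh (Yb i), Yb i - yb⟫ := by
        rw [← inner_neg_right]
        congr 1
        abel
      rw [hi2, norm_sub_rev] at hd2
      rw [inner_sub_left]
      linarith
    rw [hPhiYb]
    have hrw : (1 / (m : ℝ)) * ∑ i, (f i xb (Yb i) - h (Yb i))
        - ∑ i, (1 / (m : ℝ)) * ⟪Gy i xb (Yb i) - Gh (Yb i), Yb i - yb⟫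
        = (1 / (m : ℝ)) * ∑ i, (f i xb (Yb i) - h (Yb i)
            - ⟪Gy i xb (Yb i) - Gh (Yb i), Yb i - yb⟫) := by
      rw [← Finset.mul_sum, ← mul_sub, ← Finset.sum_sub_distrib]
    rw [hrw]
    have hsum := Finset.sum_le_sum (fun i (_ : i ∈ Finset.univ) => hper i)
    have hmul := mul_le_mul_of_nonneg_left hsum (by positivity : (0:ℝ) ≤ 1 / (m:ℝ))
    have heqr : (1 / (m : ℝ)) * ∑ i, ((f i xb yb - h yb) + (L + Lh) / 2 * ‖Yb i - yb‖ ^ 2)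
        = g yb + ((L + Lh) / (2 * (m:ℝ))) * ∑ i, ‖Yb i - yb‖ ^ 2 := by
      rw [Finset.sum_add_distrib, Finset.sum_sub_distrib, Finset.sum_const, Finset.card_univ,
        Fintype.card_fin, nsmul_eq_mul, ← Finset.mul_sum]
      simp only [hg]
      field_simp
    rw [heqr] at hmul
    exact hmul
  -- chain
  have hchain : g yh ≤ g yb + ((L + Lh) / (2 * (m:ℝ))) * ∑ i, ‖Yb i - yb‖ ^ 2 := by
    calc g yh = Phi L f h w (fun _ => xb) Lamb (fun _ => yh) := hcons.symm
      _ ≤ Phi L f h w (fun _ => xb) Lamb Yb := hmax _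
      _ ≤ _ := hbound
  have hnorm : ‖yb - yh‖ = ‖yh - yb‖ := norm_sub_rev _ _
  rw [hnorm] at hstrong
  set S : ℝ := ∑ i, ‖Yb i - yb‖ ^ 2 with hS
  have hmain : μ / 2 * ‖yh - yb‖ ^ 2 ≤ ((L + Lh) / (2 * (m:ℝ))) * S := by
    linarith
  have heq2 : 2 * ((L + Lh) / (2 * (m:ℝ)) * S) = (L + Lh) / (m:ℝ) * S := by
    field_simp
  have hfin := mul_le_mul_of_nonneg_left hmain (by norm_num : (0:ℝ) ≤ 2)
  rw [heq2] at hfin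
  calc μ * ‖yh - yb‖ ^ 2 = 2 * (μ / 2 * ‖yh - yb‖ ^ 2) := by ring
    _ ≤ (L + Lh) / (m:ℝ) * S := hfin
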